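/- Let p, q ∈ [1, ∞), α ∈ (−1, q−1), and ℓ = 1 − (1+α)/q. There exists N = N(d, p, q, α) > 0 such that for every f : ℝ^d × [0, ∞) → ℝ that is continuously differentiable up to the boundary and satisfies ‖D_x f‖_{L_{p,q}(ℝ^{d+1}_+, μ)} < ∞, one has (∫_{ℝ^d} |h|^{−qℓ−d} ‖f(· + h, |h|) − f(·, |h|)‖_{L_p(ℝ^d)}^q dh)^{1/q} ≤ N ‖D_x f‖_{L_{p,q}(ℝ^{d+1}_+, μ)}, where D_x f denotes the gradient of f in the first d (horizontal) variables. -/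

import Mathlib

open MeasureTheory ENNReal Set

section aux
variable {E : Type*} [NormedAddCommGroup E] [NormedSpace ℝ E] [MeasurableSpace E]
  [BorelSpace E] [FiniteDimensional ℝ E] [Nontrivial E]

theorem my_lintegral_fun_norm_addHaar (μ : Measure E) [μ.IsAddHaarMeasure]
    (g : ℝ → ℝ≥0∞) (hg : Measurable g) :
    ∫⁻ x, g ‖x‖ ∂μ = (Module.finrank ℝ E) * μ (Metric.ball 0 1) *
      ∫⁻ y in Ioi (0:ℝ), ENNReal.ofReal (y ^ (Module.finrank ℝ E - 1)) * g y := by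
  have hg2 : Measurable fun x : Metric.sphere (0:E) 1 × Ioi (0:ℝ) => g ↑x.2 := by
    exact (hg.comp measurable_subtype_coe).comp measurable_snd
  have hg3 : Measurable fun r : Ioi (0:ℝ) => g ↑r := by
    exact hg.comp measurable_subtype_coe
  calc
    ∫⁻ x, g ‖x‖ ∂μ = ∫⁻ x : ({(0)}ᶜ : Set E), g ‖x.1‖ ∂(μ.comap (↑)) := by
      rw [lintegral_subtype_comap (measurableSet_singleton _).compl fun x => g ‖x‖,
        restrict_compl_singleton]
    _ = ∫⁻ x : Metric.sphere (0:E) 1 × Ioi (0:ℝ), g x.2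
          ∂μ.toSphere.prod (.volumeIoiPow (Module.finrank ℝ E - 1)) :=
      by
        rw [← μ.measurePreserving_homeomorphUnitSphereProd.lintegral_comp hg2]
        refine lintegral_congr fun x => ?_
        show g ‖x.1‖ = g (‖x.1‖ / 1)
        rw [div_one]
    _ = μ.toSphere univ * ∫⁻ r : Ioi (0:ℝ), g r ∂(.volumeIoiPow (Module.finrank ℝ E - 1)) := by
      rw [lintegral_prod _ hg2.aemeasurable]
      simp only [lintegral_const, mul_comm]
    _ = _ := by
      rw [Measure.toSphere_apply_univ, Measure.volumeIoiPow,
        lintegral_withDensity_eq_lintegral_mul _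
          ((measurable_subtype_coe.pow_const _).ennreal_ofReal) hg3]
      simp only [Pi.mul_apply]
      rw [lintegral_subtype_comap measurableSet_Ioi
        (fun y => ENNReal.ofReal (y ^ (Module.finrank ℝ E - 1)) * g y), mul_assoc]
end aux

theorem my_jensen {α : Type*} [MeasurableSpace α] {μ : Measure α} (hμ : μ univ = 1)
    {g : α → ℝ≥0∞} (hg : AEMeasurable g μ) {p : ℝ} (hp : 1 ≤ p) :
    (∫⁻ a, g a ∂μ) ^ p ≤ ∫⁻ a, g a ^ p ∂μ := by
  rcases eq_or_lt_of_le hp with h1 | h1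
  · simp [← h1]
  have hpq : p.HolderConjugate (p / (p - 1)) := Real.HolderConjugate.conjExponent h1
  have := ENNReal.lintegral_mul_le_Lp_mul_Lq μ hpq hg aemeasurable_const (g := fun _ => 1)
  simp only [Pi.mul_apply, mul_one, ENNReal.one_rpow, lintegral_const, hμ, one_mul,
    ENNReal.one_rpow] at this
  calc (∫⁻ a, g a ∂μ) ^ p ≤ ((∫⁻ a, g a ^ p ∂μ) ^ (1/p)) ^ p :=
        ENNReal.rpow_le_rpow this (by positivity)
    _ = ∫⁻ a, g a ^ p ∂μ := by
        rw [← ENNReal.rpow_mul, one_div, inv_mul_cancel₀ (by positivity), ENNReal.rpow_one]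

theorem trace_horizontal_difference (d : ℕ) (p q α : ℝ) (hp : 1 ≤ p) (hq : 1 ≤ q)
    (hα1 : -1 < α) (hα2 : α < q - 1) (ℓ : ℝ) (hℓ : ℓ = 1 - (1 + α) / q) :
    ∃ N : ℝ, 0 < N ∧ ∀ f : EuclideanSpace ℝ (Fin d) × ℝ → ℝ,
      ContDiffOn ℝ 1 f (Set.univ ×ˢ Set.Ici 0) →
      (∫⁻ y in Set.Ioi (0 : ℝ),
          (∫⁻ x, ENNReal.ofReal (‖fderiv ℝ (fun z => f (z, y)) x‖ ^ p)) ^ (q / p) *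
            ENNReal.ofReal (y ^ α)) ≠ ⊤ →
      (∫⁻ h : EuclideanSpace ℝ (Fin d),
          ENNReal.ofReal (‖h‖ ^ (-(q * ℓ) - d)) *
            eLpNorm (fun x => f (x + h, ‖h‖) - f (x, ‖h‖)) (ENNReal.ofReal p) volume ^ q)
            ^ (1 / q)
        ≤ ENNReal.ofReal N *
          (∫⁻ y in Set.Ioi (0 : ℝ),
            (∫⁻ x, ENNReal.ofReal (‖fderiv ℝ (fun z => f (z, y)) x‖ ^ p)) ^ (q / p) *
              ENNReal.ofReal (y ^ α)) ^ (1 / q) := by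
  have hp0 : (0:ℝ) < p := lt_of_lt_of_le one_pos hp
  have hq0 : (0:ℝ) < q := lt_of_lt_of_le one_pos hq
  have hqℓ : q * ℓ = q - (1 + α) := by
    rw [hℓ]; field_simp
  have hqℓpos : 0 < q * ℓ := by rw [hqℓ]; linarith
  set E := EuclideanSpace ℝ (Fin d)
  set β : ℝ := -(q * ℓ) - d with hβ
  have hβneg : β < 0 := by
    have : (0:ℝ) ≤ d := Nat.cast_nonneg d
    rw [hβ]; linarith
  rcases Nat.eq_zero_or_pos d with hd | hd
  · -- degenerate case: E is trivial, LHS is zero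
    refine ⟨1, one_pos, fun f hf hfin => ?_⟩
    have hzero : ∀ h : E, ENNReal.ofReal (‖h‖ ^ β) *
        eLpNorm (fun x => f (x + h, ‖h‖) - f (x, ‖h‖)) (ENNReal.ofReal p) volume ^ q = 0 := by
      intro h
      have hh : h = 0 := by
        subst hd
        exact PiLp.ext fun i : Fin 0 => i.elim0
      rw [hh]
      simp [Real.zero_rpow hβneg.ne]
    simp only [hzero, lintegral_zero]
    rw [ENNReal.zero_rpow_of_pos (by positivity : (0:ℝ) < 1/q)]
    exact bot_le
  -- main case
  haveI : Nonempty (Fin d) := ⟨⟨0, hd⟩⟩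
  haveI : Nontrivial E := inferInstanceAs (Nontrivial (PiLp 2 fun _ : Fin d => ℝ))
  set C : ℝ≥0∞ := (d : ℝ≥0∞) * volume (Metric.ball (0:E) 1) with hC
  have hCtop : C ≠ ⊤ := by
    exact ENNReal.mul_ne_top (by simp) measure_ball_lt_top.ne
  refine ⟨C.toReal ^ (1/q) + 1, by positivity, fun f hf hfin => ?_⟩
  set U : Set (E × ℝ) := univ ×ˢ Ioi (0:ℝ) with hU
  have hUopen : IsOpen U := isOpen_univ.prod isOpen_Ioi
  have hfU : ContDiffOn ℝ 1 f U := hf.mono (prod_mono_right Ioi_subset_Ici_self)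
  have hdiff : ∀ z : E × ℝ, 0 < z.2 → DifferentiableAt ℝ f z := fun z hz =>
    (hfU.contDiffAt (hUopen.mem_nhds ⟨trivial, hz⟩)).differentiableAt one_ne_zero
  set D : E × ℝ → E →L[ℝ] ℝ := fun z => (fderiv ℝ f z).comp (ContinuousLinearMap.inl ℝ E ℝ)
    with hD
  have hcomp_cont : Continuous fun L : (E × ℝ) →L[ℝ] ℝ =>
      L.comp (ContinuousLinearMap.inl ℝ E ℝ) := continuous_id.clm_comp continuous_const
  have hDmeas : Measurable D := hcomp_cont.measurable.comp (measurable_fderiv ℝ f)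
  have hDcont : ContinuousOn D U :=
    hcomp_cont.comp_continuousOn (hfU.continuousOn_fderiv_of_isOpen hUopen le_rfl)
  have hslice : ∀ y : ℝ, 0 < y → ∀ x : E, HasFDerivAt (fun z => f (z, y)) (D (x, y)) x := by
    intro y hy x
    exact ((hdiff (x, y) hy).hasFDerivAt).comp x (hasFDerivAt_prodMk_left x y)
  set Gp : ℝ → ℝ≥0∞ := fun y => ∫⁻ x : E, ENNReal.ofReal (‖D (x, y)‖ ^ p) with hGp
  have hGpmeas : Measurable Gp := by
    have : Measurable fun w : ℝ × E => ENNReal.ofReal (‖D (w.2, w.1)‖ ^ p) :=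
      (((hDmeas.comp (measurable_snd.prodMk measurable_fst)).norm).pow_const p).ennreal_ofReal
    exact this.lintegral_prod_right'
  have hI : (∫⁻ y in Ioi (0:ℝ),
        (∫⁻ x, ENNReal.ofReal (‖fderiv ℝ (fun z => f (z, y)) x‖ ^ p)) ^ (q / p) *
          ENNReal.ofReal (y ^ α))
      = ∫⁻ y in Ioi (0:ℝ), Gp y ^ (q / p) * ENNReal.ofReal (y ^ α) := by
    refine setLIntegral_congr_fun measurableSet_Ioi (fun y hy => ?_)
    congr 2
    refine lintegral_congr fun x => ?_
    rw [(hslice y hy x).fderiv]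
  have hprob : (volume.restrict (Ioc (0:ℝ) 1)) univ = 1 := by
    simp [Real.volume_Ioc]
  have stepA : ∀ h : E, h ≠ 0 →
      (∫⁻ x : E, (‖f (x + h, ‖h‖) - f (x, ‖h‖)‖₊ : ℝ≥0∞) ^ p)
        ≤ ENNReal.ofReal (‖h‖ ^ p) * Gp ‖h‖ := by
    intro h hh
    have hy : 0 < ‖h‖ := norm_pos_iff.2 hh
    set y := ‖h‖ with hyy
    have hcont2 : Continuous fun w : E × ℝ => D (w.1 + w.2 • h, y) := by
      refine hDcont.comp_continuous
        ((continuous_fst.add (continuous_snd.smul continuous_const)).prodMk continuous_const)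
        fun w => ⟨trivial, hy⟩
    have key : ∀ x : E, (‖f (x + h, y) - f (x, y)‖₊ : ℝ≥0∞)
        ≤ ∫⁻ t in Ioc (0:ℝ) 1, ENNReal.ofReal (‖D (x + t • h, y)‖ * ‖h‖) := by
      intro x
      have hcurve : ∀ t : ℝ, HasDerivAt (fun t : ℝ => x + t • h) h t := fun t => by
        exact (((hasDerivAt_id t).smul_const h).const_add x).congr_deriv (one_smul ℝ h)
      have hderiv : ∀ t ∈ uIcc (0:ℝ) 1,
          HasDerivAt (fun t : ℝ => f (x + t • h, y)) (D (x + t • h, y) h) t := fun t _ =>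
        HasFDerivAt.comp_hasDerivAt (l := fun z => f (z, y)) t (hslice y hy (x + t • h)) (hcurve t)
      have hcont1 : Continuous fun t : ℝ => D (x + t • h, y) h :=
        (hcont2.comp (continuous_const.prodMk continuous_id)).clm_apply continuous_const
      have hFTC := intervalIntegral.integral_eq_sub_of_hasDerivAt hderiv
        (hcont1.intervalIntegrable 0 1)
      have heq : f (x + h, y) - f (x, y) = ∫ t in (0:ℝ)..1, D (x + t • h, y) h := by
        rw [hFTC]; norm_num
      calc (‖f (x + h, y) - f (x, y)‖₊ : ℝ≥0∞)
          = ENNReal.ofReal ‖∫ t in (0:ℝ)..1, D (x + t • h, y) h‖ := by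
            rw [heq, ofReal_norm]; rfl
        _ ≤ ENNReal.ofReal (∫ t in (0:ℝ)..1, ‖D (x + t • h, y) h‖) :=
            ENNReal.ofReal_le_ofReal
              (intervalIntegral.norm_integral_le_integral_norm zero_le_one)
        _ = ENNReal.ofReal (∫ t in Ioc (0:ℝ) 1, ‖D (x + t • h, y) h‖) := by
            rw [intervalIntegral.integral_of_le zero_le_one]
        _ = ∫⁻ t in Ioc (0:ℝ) 1, ENNReal.ofReal ‖D (x + t • h, y) h‖ :=
            ofReal_integral_eq_lintegral_ofReal
              (hcont1.norm.integrableOn_Ioc) (ae_of_all _ fun t => norm_nonneg _)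
        _ ≤ ∫⁻ t in Ioc (0:ℝ) 1, ENNReal.ofReal (‖D (x + t • h, y)‖ * ‖h‖) :=
            lintegral_mono fun t =>
              ENNReal.ofReal_le_ofReal ((D (x + t • h, y)).le_opNorm h)
    have hmeas_xt : AEMeasurable (Function.uncurry fun (x : E) (t : ℝ) =>
        ENNReal.ofReal (‖D (x + t • h, y)‖ * ‖h‖) ^ p)
        (volume.prod (volume.restrict (Ioc (0:ℝ) 1))) := by
      refine Measurable.aemeasurable ?_
      have : Continuous fun w : E × ℝ => ENNReal.ofReal (‖D (w.1 + w.2 • h, y)‖ * ‖h‖) ^ p := by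
        refine ENNReal.continuous_rpow_const.comp ?_
        exact (ENNReal.continuous_ofReal.comp (hcont2.norm.mul continuous_const))
      exact this.measurable
    calc ∫⁻ x : E, (‖f (x + h, y) - f (x, y)‖₊ : ℝ≥0∞) ^ p
        ≤ ∫⁻ x : E, (∫⁻ t in Ioc (0:ℝ) 1, ENNReal.ofReal (‖D (x + t • h, y)‖ * ‖h‖)) ^ p :=
          lintegral_mono fun x => ENNReal.rpow_le_rpow (key x) hp0.le
      _ ≤ ∫⁻ x : E, ∫⁻ t in Ioc (0:ℝ) 1, ENNReal.ofReal (‖D (x + t • h, y)‖ * ‖h‖) ^ p := by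
          refine lintegral_mono fun x => my_jensen hprob ?_ hp
          exact (ENNReal.continuous_ofReal.comp
            (((hcont2.comp (continuous_const.prodMk continuous_id)).norm).mul
              continuous_const)).measurable.aemeasurable
      _ = ∫⁻ t in Ioc (0:ℝ) 1, ∫⁻ x : E, ENNReal.ofReal (‖D (x + t • h, y)‖ * ‖h‖) ^ p :=
          lintegral_lintegral_swap hmeas_xt
      _ = ∫⁻ t in Ioc (0:ℝ) 1, ENNReal.ofReal (‖h‖ ^ p) * Gp y := by
          refine lintegral_congr fun t => ?_
          have hinner : ∀ x : E, ENNReal.ofReal (‖D (x + t • h, y)‖ * ‖h‖) ^ p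
              = ENNReal.ofReal (‖D (x + t • h, y)‖ ^ p) * ENNReal.ofReal (‖h‖ ^ p) := by
            intro x
            rw [ENNReal.ofReal_rpow_of_nonneg (mul_nonneg (norm_nonneg _) (norm_nonneg _)) hp0.le,
              Real.mul_rpow (norm_nonneg _) (norm_nonneg _), ENNReal.ofReal_mul (by positivity)]
          simp only [hinner]
          rw [lintegral_mul_const' _ _ ENNReal.ofReal_ne_top,
            lintegral_add_right_eq_self (fun x : E => ENNReal.ofReal (‖D (x, y)‖ ^ p)) (t • h),
            mul_comm]
      _ = ENNReal.ofReal (‖h‖ ^ p) * Gp y := by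
          rw [setLIntegral_const]
          simp [Real.volume_Ioc]
  have hpne : (ENNReal.ofReal p) ≠ 0 := by
    simp [ENNReal.ofReal_eq_zero, not_le, hp0]
  have hptoReal : (ENNReal.ofReal p).toReal = p := ENNReal.toReal_ofReal hp0.le
  have stepA' : ∀ h : E, h ≠ 0 →
      eLpNorm (fun x => f (x + h, ‖h‖) - f (x, ‖h‖)) (ENNReal.ofReal p) volume
        ≤ ENNReal.ofReal ‖h‖ * Gp ‖h‖ ^ (1/p) := by
    intro h hh
    rw [eLpNorm_eq_lintegral_rpow_enorm_toReal hpne ENNReal.ofReal_ne_top, hptoReal]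
    calc (∫⁻ x, (‖f (x + h, ‖h‖) - f (x, ‖h‖)‖₊ : ℝ≥0∞) ^ p) ^ (1/p)
        ≤ (ENNReal.ofReal (‖h‖ ^ p) * Gp ‖h‖) ^ (1/p) :=
          ENNReal.rpow_le_rpow (stepA h hh) (by positivity)
      _ = ENNReal.ofReal ‖h‖ * Gp ‖h‖ ^ (1/p) := by
          rw [ENNReal.mul_rpow_of_nonneg _ _ (by positivity),
            ← ENNReal.ofReal_rpow_of_nonneg (norm_nonneg _) hp0.le,
            ← ENNReal.rpow_mul, mul_one_div, div_self hp0.ne', ENNReal.rpow_one]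
  set Ψ : ℝ → ℝ≥0∞ := fun r => ENNReal.ofReal (r ^ (β + q)) * Gp r ^ (q/p) with hΨ
  have hΨmeas : Measurable Ψ := by
    apply Measurable.mul
    · exact (measurable_id.pow_const _).ennreal_ofReal
    · exact hGpmeas.pow_const _
  have stepB : ∀ h : E, ENNReal.ofReal (‖h‖ ^ β) *
      eLpNorm (fun x => f (x + h, ‖h‖) - f (x, ‖h‖)) (ENNReal.ofReal p) volume ^ q
        ≤ Ψ ‖h‖ := by
    intro h
    rcases eq_or_ne h 0 with rfl | hh
    · simp [Real.zero_rpow hβneg.ne]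
    · have hy : (0:ℝ) < ‖h‖ := norm_pos_iff.2 hh
      calc ENNReal.ofReal (‖h‖ ^ β) *
            eLpNorm (fun x => f (x + h, ‖h‖) - f (x, ‖h‖)) (ENNReal.ofReal p) volume ^ q
          ≤ ENNReal.ofReal (‖h‖ ^ β) * (ENNReal.ofReal ‖h‖ * Gp ‖h‖ ^ (1/p)) ^ q :=
            mul_le_mul_right (ENNReal.rpow_le_rpow (stepA' h hh) hq0.le) _
        _ = Ψ ‖h‖ := by
            rw [ENNReal.mul_rpow_of_nonneg _ _ hq0.le, ← ENNReal.rpow_mul,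
              one_div, inv_mul_eq_div, ← mul_assoc,
              ENNReal.ofReal_rpow_of_nonneg (norm_nonneg _) hq0.le,
              ← ENNReal.ofReal_mul (by positivity), ← Real.rpow_add hy]
  rw [hI]
  have hCN : C ^ (1/q) ≤ ENNReal.ofReal (C.toReal ^ (1/q) + 1) := by
    conv_lhs => rw [← ENNReal.ofReal_toReal hCtop]
    rw [ENNReal.ofReal_rpow_of_nonneg ENNReal.toReal_nonneg (by positivity)]
    exact ENNReal.ofReal_le_ofReal (by linarith)
  calc (∫⁻ h : E, ENNReal.ofReal (‖h‖ ^ β) *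
          eLpNorm (fun x => f (x + h, ‖h‖) - f (x, ‖h‖)) (ENNReal.ofReal p) volume ^ q) ^ (1/q)
      ≤ (∫⁻ h : E, Ψ ‖h‖) ^ (1/q) :=
        ENNReal.rpow_le_rpow (lintegral_mono stepB) (by positivity)
    _ = (C * ∫⁻ r in Ioi (0:ℝ), ENNReal.ofReal (r ^ (d - 1)) * Ψ r) ^ (1/q) := by
        rw [my_lintegral_fun_norm_addHaar volume Ψ hΨmeas, finrank_euclideanSpace_fin]
    _ = (C * ∫⁻ r in Ioi (0:ℝ), Gp r ^ (q/p) * ENNReal.ofReal (r ^ α)) ^ (1/q) := by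
        congr 2
        refine setLIntegral_congr_fun measurableSet_Ioi (fun r hr => ?_)
        have hr0 : (0:ℝ) < r := hr
        have hcast : ((d - 1 : ℕ) : ℝ) = (d : ℝ) - 1 := by
          rw [Nat.cast_sub hd, Nat.cast_one]
        rw [hΨ, ← mul_assoc, ← Real.rpow_natCast r (d-1), hcast,
          ← ENNReal.ofReal_mul (by positivity), ← Real.rpow_add hr0]
        have hexp : (d:ℝ) - 1 + (β + q) = α := by
          rw [hβ, hqℓ]; ring
        rw [hexp, mul_comm]
    _ ≤ ENNReal.ofReal (C.toReal ^ (1/q) + 1) *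
          (∫⁻ y in Ioi (0:ℝ), Gp y ^ (q/p) * ENNReal.ofReal (y ^ α)) ^ (1/q) := by
        rw [ENNReal.mul_rpow_of_nonneg _ _ (by positivity)]
        exact mul_le_mul_left hCN _
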